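/- A power of a separable polynomial need not have inversion-invariant tolerant: over k = ℚ, the polynomial f(x) = (x−1)²(x−2)², which is the square of the separable polynomial (x−1)(x−2), satisfies f(0) ≠ 0, tol(f) = 1, and tol(f*) = 16, so tol(f) ≠ tol(f*). -/

import Mathlib

open Polynomial
open scoped Classical

/-- The tolerant of a polynomial `f` over a field `K` (intended: `K` an algebraic closure and
`f` the image of a polynomial over a subfield): writing `f = a_n ∏ (X - r_i)^{m_i}` with
`r_1, …, r_s` distinct, `tol f = a_n^{2n-2} ∏_{i<j} (r_i - r_j)^{2 m_i m_j}`.  The product is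
taken over unordered pairs of distinct roots; this is well defined since the exponents are even. -/
noncomputable def tol {K : Type*} [Field K] (f : K[X]) : K :=
  f.leadingCoeff ^ (2 * (f.natDegree : ℤ) - 2) *
    ∏ p ∈ f.roots.toFinset.sym2.filter (fun p => ¬ p.IsDiag),
      Sym2.lift ⟨fun a b => ((a - b) ^ 2) ^ (f.rootMultiplicity a * f.rootMultiplicity b),
        fun a b => by
          dsimp only
          rw [mul_comm (rootMultiplicity a f), show (a - b) ^ 2 = (b - a) ^ 2 by ring]⟩ p

lemma tol_aux {K : Type*} [Field K] (a b c : K) (hab : a ≠ b) (hc : c ≠ 0) :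
    tol (C c * ((X - C a) * (X - C b)) ^ 2) = c ^ (6 : ℤ) * ((a - b) ^ 2) ^ 4 := by
  set g : K[X] := C c * ((X - C a) * (X - C b)) ^ 2 with hg
  have hmonic : (((X - C a) * (X - C b)) ^ 2 : K[X]).Monic :=
    ((monic_X_sub_C a).mul (monic_X_sub_C b)).pow 2
  have hlc : g.leadingCoeff = c := by
    rw [hg, leadingCoeff_mul, leadingCoeff_C, hmonic.leadingCoeff, mul_one]
  have hpne : (((X - C a) * (X - C b)) ^ 2 : K[X]) ≠ 0 := hmonic.ne_zero
  have hnd : g.natDegree = 4 := by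
    rw [hg, natDegree_mul (by simpa using hc) hpne, natDegree_C, natDegree_pow,
      natDegree_mul (X_sub_C_ne_zero a) (X_sub_C_ne_zero b), natDegree_X_sub_C,
      natDegree_X_sub_C]
  have hroots : g.roots = 2 • ({a} + {b}) := by
    rw [hg, roots_C_mul _ hc, roots_pow,
      roots_mul (mul_ne_zero (X_sub_C_ne_zero a) (X_sub_C_ne_zero b)),
      roots_X_sub_C, roots_X_sub_C]
  have htf : g.roots.toFinset = {a, b} := by
    rw [hroots]
    ext x
    simp [Multiset.mem_nsmul]
  have hma : g.rootMultiplicity a = 2 := by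
    rw [← count_roots, hroots]
    simp [Multiset.count_nsmul, Multiset.count_singleton, hab.symm, if_neg hab]
  have hmb : g.rootMultiplicity b = 2 := by
    rw [← count_roots, hroots]
    simp [Multiset.count_nsmul, Multiset.count_singleton, hab, if_neg hab.symm]
  have hfilter : (g.roots.toFinset.sym2.filter (fun p => ¬ p.IsDiag)) = {s(a, b)} := by
    rw [htf]
    ext p
    induction p using Sym2.ind with
    | _ x y =>
      simp only [Finset.mem_filter, Finset.mk_mem_sym2_iff, Finset.mem_insert,
        Finset.mem_singleton, Sym2.isDiag_iff_proj_eq, Sym2.eq_iff]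
      constructor
      · rintro ⟨⟨hx | hx, hy | hy⟩, hxy⟩ <;> simp_all
      · rintro (⟨rfl, rfl⟩ | ⟨rfl, rfl⟩)
        · exact ⟨⟨by tauto, by tauto⟩, by simpa using hab⟩
        · exact ⟨⟨by simp, by simp⟩, by simpa using hab.symm⟩
  rw [tol, hfilter, hlc, hnd, Finset.prod_singleton]
  norm_num [Sym2.lift_mk, hma, hmb]

lemma reverse_sq_eq : reverse (((X - C 1) * (X - C 2)) ^ 2 : ℚ[X]) =
    ((1 - X) * (1 - C 2 * X)) ^ 2 := by
  have hrev : ∀ a : ℚ, reverse (X - C a) = 1 - C a * X := by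
    intro a
    unfold reverse
    rw [natDegree_X_sub_C, show (X - C a : ℚ[X]) = X ^ 1 - C a * X ^ 0 by simp]
    rw [reflect_sub, reflect_monomial, reflect_C_mul, reflect_monomial]
    simp
  rw [sq, sq, reverse_mul_of_domain, reverse_mul_of_domain, hrev, hrev]
  simp

lemma map_sq_eq : (((X - C 1) * (X - C 2)) ^ 2 : ℚ[X]).map (algebraMap ℚ (AlgebraicClosure ℚ)) =
    C 1 * ((X - C 1) * (X - C 2)) ^ 2 := by
  simp [Polynomial.map_pow, Polynomial.map_mul, Polynomial.map_sub, map_ofNat]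

lemma map_rev_eq : (((1 - X) * (1 - C 2 * X)) ^ 2 : ℚ[X]).map
      (algebraMap ℚ (AlgebraicClosure ℚ)) =
    C 4 * ((X - C 1) * (X - C (2⁻¹ : AlgebraicClosure ℚ))) ^ 2 := by
  set K := AlgebraicClosure ℚ
  have h2 : (2 : K[X]) * C (2⁻¹ : K) = 1 := by
    rw [show (2 : K[X]) = C 2 by simp [map_ofNat], ← C_mul]; norm_num
  rw [show (C (4 : K)) = 4 by simp [map_ofNat]]
  simp only [Polynomial.map_pow, Polynomial.map_mul, Polynomial.map_sub, Polynomial.map_one,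
    map_C, map_X, map_ofNat, Polynomial.map_ofNat]
  rw [show (C (1 : K)) = 1 by simp]
  linear_combination ((X - 1) * ((1 - X) * (1 - 2 * X) + 2 * (X - 1) * (X - C (2⁻¹ : K)))) * h2

/-- A power of a separable polynomial need not have inversion-invariant tolerant: over `ℚ`,
`f = ((x-1)(x-2))² = (x-1)²(x-2)²` is the square of the separable polynomial `(x-1)(x-2)`,
satisfies `f(0) ≠ 0`, `tol f = 1` and `tol f* = 16`, so `tol f ≠ tol f*`
(where `f* = f.reverse` is the reciprocal polynomial). -/
theorem tol_sq_not_inversion_invariant :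
    ((X - C 1) * (X - C 2) : ℚ[X]).Separable ∧
      ((((X - C 1) * (X - C 2)) ^ 2 : ℚ[X]).eval 0 ≠ 0) ∧
      tol (((((X - C 1) * (X - C 2)) ^ 2 : ℚ[X])).map (algebraMap ℚ (AlgebraicClosure ℚ))) = 1 ∧
      tol (((((X - C 1) * (X - C 2)) ^ 2 : ℚ[X])).reverse.map
        (algebraMap ℚ (AlgebraicClosure ℚ))) = 16 ∧
      tol (((((X - C 1) * (X - C 2)) ^ 2 : ℚ[X])).map (algebraMap ℚ (AlgebraicClosure ℚ))) ≠
        tol (((((X - C 1) * (X - C 2)) ^ 2 : ℚ[X])).reverse.map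
          (algebraMap ℚ (AlgebraicClosure ℚ))) := by
  have hsep : ((X - C 1) * (X - C 2) : ℚ[X]).Separable :=
    (separable_X_sub_C).mul (separable_X_sub_C)
      (isCoprime_X_sub_C_of_isUnit_sub (by norm_num))
  have h1 : tol (((((X - C 1) * (X - C 2)) ^ 2 : ℚ[X])).map
      (algebraMap ℚ (AlgebraicClosure ℚ))) = 1 := by
    rw [map_sq_eq, tol_aux 1 2 1 (by norm_num) one_ne_zero]
    norm_num
  have h2 : tol (((((X - C 1) * (X - C 2)) ^ 2 : ℚ[X])).reverse.map
      (algebraMap ℚ (AlgebraicClosure ℚ))) = 16 := by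
    rw [reverse_sq_eq, map_rev_eq, tol_aux 1 2⁻¹ 4 (by norm_num) (by norm_num)]
    norm_num
  refine ⟨hsep, ?_, h1, h2, by rw [h1, h2]; norm_num⟩
  simp only [eval_pow, eval_mul, eval_sub, eval_X, eval_C]
  norm_num
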